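/- Let φ : [0,1] → [0,1] satisfy: for every ε, φ(ε) is the supremum of ṽ such that β∫_ε^ṽ(v−ε)f_A dv + ∫_ε^{w₂⁻¹(ε)}(v−ε)f_B dv ≤ K, where K = ∫_0^1(v−w₂(v))f_B dv, f_A, f_B are densities bounded above and below by positive constants, and w₂⁻¹ is the generalized inverse of a nondecreasing w₂ with w₂(v) ≤ v. Then φ has no upward jump: there is no ε and δ > 0 such that for all η > 0 there exists ε' ∈ (ε, ε+η) with φ(ε') > φ(ε) + δ, nor ε' ∈ (ε−η, ε) with φ(ε) > φ(ε') + δ. -/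

import Mathlib

open MeasureTheory Set intervalIntegral

lemma intble_gen (g : ℝ → ℝ) (hg : Measurable g) {M : ℝ}
    (hb : ∀ v ∈ Set.Icc (0:ℝ) 1, |g v| ≤ M) {a b : ℝ}
    (ha : a ∈ Set.Icc (0:ℝ) 1) (hbb : b ∈ Set.Icc (0:ℝ) 1) :
    IntervalIntegrable g volume a b := by
  rw [intervalIntegrable_iff]
  apply Measure.integrableOn_of_bounded (M := M) (measure_Ioc_lt_top).ne
    hg.aestronglyMeasurable
  refine (ae_restrict_iff' measurableSet_uIoc).mpr (ae_of_all _ ?_)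
  intro v hv
  have hsub : Set.uIoc a b ⊆ Set.Icc (0:ℝ) 1 := by
    rw [Set.uIoc]
    intro y hy
    constructor
    · exact le_trans (le_min ha.1 hbb.1) hy.1.le
    · exact le_trans hy.2 (max_le ha.2 hbb.2)
  simpa using hb v (hsub hv)

lemma intble_lin (f : ℝ → ℝ) (hm : Measurable f) {fu : ℝ}
    (hu : ∀ v ∈ Set.Icc (0:ℝ) 1, |f v| ≤ fu) {c a b : ℝ}
    (hc : c ∈ Set.Icc (0:ℝ) 1) (ha : a ∈ Set.Icc (0:ℝ) 1) (hbb : b ∈ Set.Icc (0:ℝ) 1) :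
    IntervalIntegrable (fun v => (v - c) * f v) volume a b := by
  apply intble_gen _ ((measurable_id.sub measurable_const).mul hm) (M := fu) _ ha hbb
  intro v hv
  have h1 : |v - c| ≤ 1 := abs_le.mpr ⟨by linarith [hv.1, hc.2], by linarith [hv.2, hc.1]⟩
  calc |(v - c) * f v| = |v - c| * |f v| := abs_mul _ _
    _ ≤ 1 * fu := mul_le_mul h1 (hu v hv) (abs_nonneg _) zero_le_one
    _ = fu := one_mul _

open MeasureTheory Set intervalIntegral

section
variable (f : ℝ → ℝ) (hm : Measurable f) (fl fu : ℝ) (hfl : 0 < fl)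
  (hl : ∀ v ∈ Set.Icc (0:ℝ) 1, fl ≤ f v) (hu : ∀ v ∈ Set.Icc (0:ℝ) 1, f v ≤ fu)

include hm hfl hl hu

set_option linter.unusedSectionVars false in
lemma habs : ∀ v ∈ Set.Icc (0:ℝ) 1, |f v| ≤ fu := by
  intro v hv
  rw [abs_of_nonneg (le_trans hfl.le (hl v hv))]
  exact hu v hv

-- lower bound on the integral over [a,b], c ≤ a
lemma int_lower {c a b : ℝ} (h0 : 0 ≤ c) (hca : c ≤ a) (hab : a ≤ b) (hb1 : b ≤ 1) :
    fl * ((a - c) * (b - a)) ≤ ∫ v in a..b, (v - c) * f v := by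
  have hmem : ∀ x : ℝ, x ∈ Set.Icc a b → x ∈ Set.Icc (0:ℝ) 1 :=
    fun x hx => ⟨le_trans (h0.trans hca) hx.1, le_trans hx.2 hb1⟩
  have hc : c ∈ Set.Icc (0:ℝ) 1 := ⟨h0, by linarith⟩
  have key := intervalIntegral.integral_mono_on (f := fun _ => (a - c) * fl)
    (g := fun v => (v - c) * f v) hab intervalIntegrable_const
    (intble_lin f hm (habs f hm fl fu hfl hl hu) hc ⟨h0.trans hca, by linarith⟩
      ⟨by linarith, hb1⟩)
    (fun x hx => mul_le_mul (by linarith [hx.1]) (hl x (hmem x hx)) hfl.le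
      (by linarith [hx.1]))
  rw [intervalIntegral.integral_const, smul_eq_mul] at key
  nlinarith [key]

lemma int_nonneg {c a b : ℝ} (h0 : 0 ≤ c) (hca : c ≤ a) (hab : a ≤ b) (hb1 : b ≤ 1) :
    0 ≤ ∫ v in a..b, (v - c) * f v := by
  have h := int_lower f hm fl fu hfl hl hu h0 hca hab hb1
  have : 0 ≤ fl * ((a - c) * (b - a)) :=
    mul_nonneg hfl.le (mul_nonneg (by linarith) (by linarith))
  linarith

-- dropping the upper limit from b to a loses at least fl*(a-c)*(b-a)
lemma int_drop {c a b : ℝ} (h0 : 0 ≤ c) (hca : c ≤ a) (hab : a ≤ b) (hb1 : b ≤ 1) :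
    ∫ v in c..a, (v - c) * f v ≤ (∫ v in c..b, (v - c) * f v) - fl * ((a - c) * (b - a)) := by
  have hc : c ∈ Set.Icc (0:ℝ) 1 := ⟨h0, by linarith⟩
  have ha : a ∈ Set.Icc (0:ℝ) 1 := ⟨h0.trans hca, by linarith⟩
  have hb : b ∈ Set.Icc (0:ℝ) 1 := ⟨by linarith, hb1⟩
  have habs' := habs f hm fl fu hfl hl hu
  have hsplit := intervalIntegral.integral_add_adjacent_intervals
    (intble_lin f hm habs' hc hc ha) (intble_lin f hm habs' hc ha hb)
    (a := c) (b := a) (c := b)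
  have hlow := int_lower f hm fl fu hfl hl hu h0 hca hab hb1
  linarith

-- shifting the lower endpoint from ε down to ε' costs at most 2*fu*(ε-ε')
lemma int_shift {ε' ε u : ℝ} (h0 : 0 ≤ ε') (h1 : ε' ≤ ε) (h2 : ε ≤ u) (h3 : u ≤ 1) :
    ∫ v in ε'..u, (v - ε') * f v ≤ (∫ v in ε..u, (v - ε) * f v) + 2 * fu * (ε - ε') := by
  have habs' := habs f hm fl fu hfl hl hu
  have hfu : 0 < fu := lt_of_lt_of_le hfl (le_trans (hl 0 ⟨le_refl _, zero_le_one⟩)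
    (hu 0 ⟨le_refl _, zero_le_one⟩))
  have hε' : ε' ∈ Set.Icc (0:ℝ) 1 := ⟨h0, by linarith⟩
  have hε : ε ∈ Set.Icc (0:ℝ) 1 := ⟨by linarith, by linarith⟩
  have hub : u ∈ Set.Icc (0:ℝ) 1 := ⟨by linarith, h3⟩
  have hsplit := intervalIntegral.integral_add_adjacent_intervals
    (intble_lin f hm habs' hε' hε' hε) (intble_lin f hm habs' hε' hε hub)
    (a := ε') (b := ε) (c := u)
  -- first piece: ∫_{ε'}^{ε} (v-ε') f ≤ (ε-ε')*((ε-ε')*fu) ≤ fu*(ε-ε')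
  have hp1 : ∫ v in ε'..ε, (v - ε') * f v ≤ (ε - ε') * ((ε - ε') * fu) := by
    have key := intervalIntegral.integral_mono_on (f := fun v => (v - ε') * f v)
      (g := fun _ => (ε - ε') * fu) h1
      (intble_lin f hm habs' hε' hε' hε) intervalIntegrable_const
      (fun x hx => by
        have hx01 : x ∈ Set.Icc (0:ℝ) 1 := ⟨h0.trans hx.1, by linarith [hx.2]⟩
        have h1' := hl x hx01
        have h2' := hu x hx01
        show (x - ε') * f x ≤ (ε - ε') * fu
        exact mul_le_mul (by linarith [hx.2]) h2' (by linarith) (by linarith))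
    rwa [intervalIntegral.integral_const, smul_eq_mul] at key
  -- second piece
  have hp2 : ∫ v in ε..u, (v - ε') * f v
      ≤ (∫ v in ε..u, (v - ε) * f v) + (u - ε) * ((ε - ε') * fu) := by
    have key := intervalIntegral.integral_mono_on (f := fun v => (v - ε') * f v)
      (g := fun v => (v - ε) * f v + (ε - ε') * fu) h2
      (intble_lin f hm habs' hε' hε hub)
      ((intble_lin f hm habs' hε hε hub).add intervalIntegrable_const)
      (fun x hx => by
        have hx01 : x ∈ Set.Icc (0:ℝ) 1 := ⟨by linarith [hx.1], le_trans hx.2 h3⟩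
        have h1' := hl x hx01
        have h2' := hu x hx01
        show (x - ε') * f x ≤ (x - ε) * f x + (ε - ε') * fu
        nlinarith [mul_le_mul_of_nonneg_left h2' (show (0:ℝ) ≤ ε - ε' by linarith)])
    rw [intervalIntegral.integral_add (intble_lin f hm habs' hε hε hub)
      intervalIntegrable_const, intervalIntegral.integral_const, smul_eq_mul] at key
    exact key
  have hq1 : (ε - ε') * ((ε - ε') * fu) ≤ (ε - ε') * fu := by
    have := mul_le_mul_of_nonneg_right (show ε - ε' ≤ 1 by linarith)
      (mul_nonneg (show (0:ℝ) ≤ ε - ε' by linarith) hfu.le)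
    linarith
  have hq2 : (u - ε) * ((ε - ε') * fu) ≤ (ε - ε') * fu := by
    have := mul_le_mul_of_nonneg_right (show u - ε ≤ 1 by linarith)
      (mul_nonneg (show (0:ℝ) ≤ ε - ε' by linarith) hfu.le)
    linarith
  linarith

end
theorem stmt15 (β flower fupper : ℝ) (hβ : 1 ≤ β) (hfl : 0 < flower)
    (fA fB : ℝ → ℝ) (hmA : Measurable fA) (hmB : Measurable fB)
    (hAl : ∀ v ∈ Set.Icc (0:ℝ) 1, flower ≤ fA v)
    (hAu : ∀ v ∈ Set.Icc (0:ℝ) 1, fA v ≤ fupper)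
    (hBl : ∀ v ∈ Set.Icc (0:ℝ) 1, flower ≤ fB v)
    (hBu : ∀ v ∈ Set.Icc (0:ℝ) 1, fB v ≤ fupper)
    (w₂ w₂inv : ℝ → ℝ) (hw₂mono : MonotoneOn w₂ (Set.Icc 0 1))
    (hw₂le : ∀ v ∈ Set.Icc (0:ℝ) 1, w₂ v ∈ Set.Icc 0 v)
    (hinv : ∀ ε, w₂inv ε = sSup {v : ℝ | v ∈ Set.Icc (0:ℝ) 1 ∧ w₂ v ≤ ε})
    (K : ℝ) (hK : K = ∫ v in (0:ℝ)..1, (v - w₂ v) * fB v)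
    (φ : ℝ → ℝ)
    (hφ : ∀ ε, φ ε = sSup {u : ℝ | u ∈ Set.Icc ε 1 ∧
        β * (∫ v in ε..u, (v - ε) * fA v)
          + (∫ v in ε..(w₂inv ε), (v - ε) * fB v) ≤ K}) :
    ∀ x ∈ Set.Icc (0:ℝ) 1,
      ¬ (∃ δ > 0, ∀ η > 0, ∃ x' ∈ Set.Ioo (x - η) x ∩ Set.Icc (0:ℝ) 1,
            φ x' + δ < φ x) ∧
      ¬ (∃ δ > 0, ∀ η > 0, ∃ x' ∈ Set.Ioo x (x + η) ∩ Set.Icc (0:ℝ) 1,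
            φ x + δ < φ x') := by
  have hβ0 : (0:ℝ) < β := lt_of_lt_of_le zero_lt_one hβ
  have h01 : (0:ℝ) ∈ Set.Icc (0:ℝ) 1 := ⟨le_refl _, zero_le_one⟩
  have hfu : 0 < fupper := lt_of_lt_of_le hfl (le_trans (hBl 0 h01) (hBu 0 h01))
  have habsA : ∀ v ∈ Set.Icc (0:ℝ) 1, |fA v| ≤ fupper := habs fA hmA flower fupper hfl hAl hAu
  have habsB : ∀ v ∈ Set.Icc (0:ℝ) 1, |fB v| ≤ fupper := habs fB hmB flower fupper hfl hBl hBu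
  -- facts about w₂inv
  have hSne : ∀ ε : ℝ, ε ∈ Set.Icc (0:ℝ) 1 → ε ∈ {v : ℝ | v ∈ Set.Icc (0:ℝ) 1 ∧ w₂ v ≤ ε} :=
    fun ε hε => ⟨hε, (hw₂le ε hε).2⟩
  have hSbdd : ∀ ε : ℝ, BddAbove {v : ℝ | v ∈ Set.Icc (0:ℝ) 1 ∧ w₂ v ≤ ε} :=
    fun ε => ⟨1, fun v hv => hv.1.2⟩
  have hWge : ∀ ε ∈ Set.Icc (0:ℝ) 1, ε ≤ w₂inv ε := fun ε hε => by
    rw [hinv]; exact le_csSup (hSbdd ε) (hSne ε hε)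
  have hWle1 : ∀ ε ∈ Set.Icc (0:ℝ) 1, w₂inv ε ≤ 1 := fun ε hε => by
    rw [hinv]; exact csSup_le ⟨ε, hSne ε hε⟩ (fun v hv => hv.1.2)
  have hWmono : ∀ ε' ε : ℝ, ε' ∈ Set.Icc (0:ℝ) 1 → ε' ≤ ε → w₂inv ε' ≤ w₂inv ε := by
    intro ε' ε hε' h
    rw [hinv, hinv]
    exact csSup_le_csSup (hSbdd ε) ⟨ε', hSne ε' hε'⟩ (fun v hv => ⟨hv.1, hv.2.trans h⟩)
  -- measurable extension of the K-integrand
  set g₂ : ℝ → ℝ := fun v => (v - w₂ (max 0 (min 1 v))) * fB v with hg₂def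
  have hclampmem : ∀ v : ℝ, max 0 (min 1 v) ∈ Set.Icc (0:ℝ) 1 :=
    fun v => ⟨le_max_left _ _, max_le zero_le_one (min_le_left _ _)⟩
  have hclamp : ∀ v ∈ Set.Icc (0:ℝ) 1, max 0 (min 1 v) = v := fun v hv => by
    rw [min_eq_right hv.2, max_eq_right hv.1]
  have hmong : Monotone (fun v : ℝ => w₂ (max 0 (min 1 v))) := by
    intro a b hab
    exact hw₂mono (hclampmem a) (hclampmem b)
      (max_le_max (le_refl 0) (min_le_min (le_refl 1) hab))
  have hmg₂ : Measurable g₂ := (measurable_id.sub hmong.measurable).mul hmB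
  have hg₂eq : ∀ v ∈ Set.Icc (0:ℝ) 1, g₂ v = (v - w₂ v) * fB v := fun v hv => by
    rw [hg₂def]; simp only [hclamp v hv]
  have hg₂nn : ∀ v ∈ Set.Icc (0:ℝ) 1, 0 ≤ g₂ v := by
    intro v hv
    rw [hg₂eq v hv]
    have hw := hw₂le v hv
    exact mul_nonneg (by linarith [hw.2]) (by linarith [hBl v hv])
  have hg₂bd : ∀ v ∈ Set.Icc (0:ℝ) 1, |g₂ v| ≤ fupper := by
    intro v hv
    rw [abs_of_nonneg (hg₂nn v hv), hg₂eq v hv]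
    have hw := hw₂le v hv
    calc (v - w₂ v) * fB v ≤ 1 * fupper :=
          mul_le_mul (by linarith [hw.1, hv.2]) (hBu v hv) (by linarith [hBl v hv]) zero_le_one
      _ = fupper := one_mul _
  have hKg : K = ∫ v in (0:ℝ)..1, g₂ v := by
    rw [hK]
    apply intervalIntegral.integral_congr
    intro v hv
    rw [Set.uIcc_of_le zero_le_one] at hv
    exact (hg₂eq v hv).symm
  -- the B-term is at most K
  have hBterm : ∀ ε ∈ Set.Icc (0:ℝ) 1, (∫ v in ε..(w₂inv ε), (v - ε) * fB v) ≤ K := by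
    intro ε hε
    have hab : ε ≤ w₂inv ε := hWge ε hε
    have hWε : w₂inv ε ∈ Set.Icc (0:ℝ) 1 := ⟨hε.1.trans hab, hWle1 ε hε⟩
    have hint1 : IntervalIntegrable (fun v => (v - ε) * fB v) volume ε (w₂inv ε) :=
      intble_lin fB hmB habsB hε hε hWε
    have hint2 : IntervalIntegrable g₂ volume ε (w₂inv ε) :=
      intble_gen g₂ hmg₂ hg₂bd hε hWε
    have hae : (fun v => (v - ε) * fB v) ≤ᵐ[volume.restrict (Set.Icc ε (w₂inv ε))] g₂ := by
      have h0 : ∀ᵐ v ∂(volume.restrict (Set.Icc ε (w₂inv ε))), v ∈ Set.Icc ε (w₂inv ε) :=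
        ae_restrict_mem measurableSet_Icc
      have h1 : ∀ᵐ (v : ℝ), v ∉ ({w₂inv ε} : Set ℝ) :=
        measure_eq_zero_iff_ae_notMem.mp (measure_singleton _)
      filter_upwards [h0, ae_restrict_of_ae h1] with v hv hne
      have hv01 : v ∈ Set.Icc (0:ℝ) 1 := ⟨hε.1.trans hv.1, hv.2.trans hWε.2⟩
      have hwv : w₂ v ≤ ε := by
        have hlt : v < w₂inv ε := lt_of_le_of_ne hv.2 (by simpa using hne)
        rw [hinv] at hlt
        obtain ⟨v₀, hv₀, hvv₀⟩ := exists_lt_of_lt_csSup ⟨ε, hSne ε hε⟩ hlt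
        exact le_trans (hw₂mono hv01 hv₀.1 hvv₀.le) hv₀.2
      show (v - ε) * fB v ≤ g₂ v
      rw [hg₂eq v hv01]
      exact mul_le_mul_of_nonneg_right (by linarith) (by linarith [hBl v hv01])
    have hstep1 := intervalIntegral.integral_mono_ae_restrict hab hint1 hint2 hae
    have hstep2 : (∫ v in ε..(w₂inv ε), g₂ v) ≤ ∫ v in (0:ℝ)..1, g₂ v := by
      apply intervalIntegral.integral_mono_interval hε.1 hab hWε.2
      · refine (ae_restrict_iff' measurableSet_Ioc).mpr (ae_of_all _ ?_)
        intro v hv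
        exact hg₂nn v ⟨hv.1.le, hv.2⟩
      · exact intble_gen g₂ hmg₂ hg₂bd h01 ⟨zero_le_one, le_refl 1⟩
    rw [hKg]
    linarith
  -- the feasible set: self-membership, upper bounds, approximation of the sup
  have hself : ∀ ε ∈ Set.Icc (0:ℝ) 1, ε ∈ Set.Icc ε 1 ∧
      β * (∫ v in ε..ε, (v - ε) * fA v)
        + (∫ v in ε..(w₂inv ε), (v - ε) * fB v) ≤ K := by
    intro ε hε
    refine ⟨⟨le_refl ε, hε.2⟩, ?_⟩
    rw [intervalIntegral.integral_same, mul_zero, zero_add]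
    exact hBterm ε hε
  have hle : ∀ ε u : ℝ, u ∈ Set.Icc ε 1 →
      β * (∫ v in ε..u, (v - ε) * fA v)
        + (∫ v in ε..(w₂inv ε), (v - ε) * fB v) ≤ K → u ≤ φ ε := by
    intro ε u h1 h2
    rw [hφ]
    exact le_csSup ⟨1, fun y hy => hy.1.2⟩ ⟨h1, h2⟩
  have happx : ∀ ε ∈ Set.Icc (0:ℝ) 1, ∀ θ : ℝ, 0 < θ → ∃ u₀ : ℝ, u₀ ∈ Set.Icc ε 1 ∧
      (β * (∫ v in ε..u₀, (v - ε) * fA v)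
        + (∫ v in ε..(w₂inv ε), (v - ε) * fB v) ≤ K) ∧ φ ε - θ < u₀ := by
    intro ε hε θ hθ
    have hlt : φ ε - θ < sSup {u : ℝ | u ∈ Set.Icc ε 1 ∧
        β * (∫ v in ε..u, (v - ε) * fA v)
          + (∫ v in ε..(w₂inv ε), (v - ε) * fB v) ≤ K} := by
      rw [← hφ]; linarith
    obtain ⟨u₀, hu₀, hgt⟩ := exists_lt_of_lt_csSup ⟨ε, hself ε hε⟩ hlt
    exact ⟨u₀, hu₀.1, hu₀.2, hgt⟩
  have hφge : ∀ ε ∈ Set.Icc (0:ℝ) 1, ε ≤ φ ε := fun ε hε =>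
    hle ε ε (hself ε hε).1 (hself ε hε).2
  have hφle1 : ∀ ε ∈ Set.Icc (0:ℝ) 1, φ ε ≤ 1 := by
    intro ε hε
    rw [hφ]
    exact csSup_le ⟨ε, hself ε hε⟩ (fun u hu => hu.1.2)
  intro x hx
  constructor
  · -- no upward jump from the left
    rintro ⟨δ, hδ, h⟩
    have hden : (0:ℝ) < 16 * ((2 * β + 2) * fupper) := by positivity
    obtain ⟨x', ⟨hxo, hxc⟩, hjump⟩ := h
      (min (δ / 4) (β * flower * δ ^ 2 / (16 * ((2 * β + 2) * fupper))))
      (lt_min (by linarith) (by positivity))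
    have hηδ : min (δ / 4) (β * flower * δ ^ 2 / (16 * ((2 * β + 2) * fupper))) ≤ δ / 4 :=
      min_le_left _ _
    have hηs : min (δ / 4) (β * flower * δ ^ 2 / (16 * ((2 * β + 2) * fupper)))
        ≤ β * flower * δ ^ 2 / (16 * ((2 * β + 2) * fupper)) := min_le_right _ _
    have hx'lt : x' < x := hxo.2
    have hx'gt : x - min (δ / 4) (β * flower * δ ^ 2 / (16 * ((2 * β + 2) * fupper))) < x' :=
      hxo.1
    have hφx' := hφge x' hxc
    have hφx1 := hφle1 x hx
    have hgt : x' + δ < φ x := by linarith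
    obtain ⟨u₀, hu₀I, hu₀K, hu₀gt⟩ := happx x hx (δ / 4) (by linarith)
    have hu₀x : x ≤ u₀ := hu₀I.1
    have hu₀1 : u₀ ≤ 1 := hu₀I.2
    have hδ4 : x' + 3 * δ / 4 < u₀ := by linarith
    have hA1 : ∫ v in x'..(u₀ - δ / 2), (v - x') * fA v ≤
        (∫ v in x'..u₀, (v - x') * fA v)
          - flower * ((u₀ - δ / 2 - x') * (u₀ - (u₀ - δ / 2))) :=
      int_drop fA hmA flower fupper hfl hAl hAu hxc.1 (by linarith) (by linarith) hu₀1
    have hA2 : ∫ v in x'..u₀, (v - x') * fA v ≤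
        (∫ v in x..u₀, (v - x) * fA v) + 2 * fupper * (x - x') :=
      int_shift fA hmA flower fupper hfl hAl hAu hxc.1 hx'lt.le hu₀x hu₀1
    have hB1 : ∫ v in x'..(w₂inv x'), (v - x') * fB v ≤
        (∫ v in x..(w₂inv x), (v - x) * fB v) + 2 * fupper * (x - x') := by
      have hd := int_drop fB hmB flower fupper hfl hBl hBu hxc.1 (hWge x' hxc)
        (hWmono x' x hxc hx'lt.le) (hWle1 x hx)
      have hnn : 0 ≤ flower * ((w₂inv x' - x') * (w₂inv x - w₂inv x')) :=
        mul_nonneg hfl.le (mul_nonneg (by linarith [hWge x' hxc])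
          (by linarith [hWmono x' x hxc hx'lt.le]))
      have hsh := int_shift fB hmB flower fupper hfl hBl hBu hxc.1 hx'lt.le
        (hWge x hx) (hWle1 x hx)
      linarith
    have p1 : flower * (δ / 4 * (δ / 2)) ≤
        flower * ((u₀ - δ / 2 - x') * (u₀ - (u₀ - δ / 2))) := by
      apply mul_le_mul_of_nonneg_left _ hfl.le
      have h1 : u₀ - (u₀ - δ / 2) = δ / 2 := by ring
      rw [h1]
      exact mul_le_mul_of_nonneg_right (by linarith) (by linarith)
    have hscal : (2 * β + 2) * fupper
        * (min (δ / 4) (β * flower * δ ^ 2 / (16 * ((2 * β + 2) * fupper))))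
        ≤ β * flower * δ ^ 2 / 16 := by
      have h2 : (0:ℝ) < (2 * β + 2) * fupper := by positivity
      calc (2 * β + 2) * fupper
            * (min (δ / 4) (β * flower * δ ^ 2 / (16 * ((2 * β + 2) * fupper))))
          ≤ (2 * β + 2) * fupper * (β * flower * δ ^ 2 / (16 * ((2 * β + 2) * fupper))) :=
            mul_le_mul_of_nonneg_left hηs h2.le
        _ = β * flower * δ ^ 2 / 16 := by field_simp
    have hfeas : β * (∫ v in x'..(u₀ - δ / 2), (v - x') * fA v)
        + (∫ v in x'..(w₂inv x'), (v - x') * fB v) ≤ K := by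
      have s1 := mul_le_mul_of_nonneg_left hA1 hβ0.le
      rw [mul_sub] at s1
      have s2 := mul_le_mul_of_nonneg_left hA2 hβ0.le
      rw [mul_add] at s2
      have s3 := mul_le_mul_of_nonneg_left p1 hβ0.le
      have q1 : β * (flower * (δ / 4 * (δ / 2))) = β * flower * δ ^ 2 / 8 := by ring
      have q2 := mul_le_mul_of_nonneg_left
        (show x - x' ≤ min (δ / 4) (β * flower * δ ^ 2 / (16 * ((2 * β + 2) * fupper)))
          by linarith)
        (show (0:ℝ) ≤ β * (2 * fupper) by positivity)
      have q4 := mul_le_mul_of_nonneg_left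
        (show x - x' ≤ min (δ / 4) (β * flower * δ ^ 2 / (16 * ((2 * β + 2) * fupper)))
          by linarith)
        (show (0:ℝ) ≤ 2 * fupper by positivity)
      have hpos : (0:ℝ) ≤ β * flower * δ ^ 2 := by positivity
      linarith [s1, s2, s3, hB1, hu₀K, q1, q2, q4, hscal, hpos]
    have hup := hle x' (u₀ - δ / 2) ⟨by linarith, by linarith⟩ hfeas
    linarith
  · -- no upward jump from the right
    rintro ⟨δ, hδ, h⟩
    have hden : (0:ℝ) < 16 * ((2 * β + 2) * fupper) := by positivity
    obtain ⟨x', ⟨hxo, hxc⟩, hjump⟩ := h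
      (min (δ / 4) (β * flower * δ ^ 2 / (16 * ((2 * β + 2) * fupper))))
      (lt_min (by linarith) (by positivity))
    have hηδ : min (δ / 4) (β * flower * δ ^ 2 / (16 * ((2 * β + 2) * fupper))) ≤ δ / 4 :=
      min_le_left _ _
    have hηs : min (δ / 4) (β * flower * δ ^ 2 / (16 * ((2 * β + 2) * fupper)))
        ≤ β * flower * δ ^ 2 / (16 * ((2 * β + 2) * fupper)) := min_le_right _ _
    have hxx' : x < x' := hxo.1
    have hx'x : x' < x + min (δ / 4) (β * flower * δ ^ 2 / (16 * ((2 * β + 2) * fupper))) :=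
      hxo.2
    have hφx := hφge x hx
    have hφx'1 := hφle1 x' hxc
    obtain ⟨u₀, hu₀I, hu₀K, hu₀gt⟩ := happx x' hxc (δ / 4) (by linarith)
    have hu₀1 : u₀ ≤ 1 := hu₀I.2
    have hu₀u : φ x + δ / 2 + δ / 4 < u₀ := by linarith
    have hux' : x' + δ / 4 ≤ φ x + δ / 2 := by linarith
    have hu1 : φ x + δ / 2 ≤ 1 := by linarith
    have hA2 : ∫ v in x..(φ x + δ / 2), (v - x) * fA v ≤
        (∫ v in x'..(φ x + δ / 2), (v - x') * fA v) + 2 * fupper * (x' - x) :=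
      int_shift fA hmA flower fupper hfl hAl hAu hx.1 hxx'.le (by linarith) hu1
    have hA1 : ∫ v in x'..(φ x + δ / 2), (v - x') * fA v ≤
        (∫ v in x'..u₀, (v - x') * fA v)
          - flower * ((φ x + δ / 2 - x') * (u₀ - (φ x + δ / 2))) :=
      int_drop fA hmA flower fupper hfl hAl hAu hxc.1 (by linarith) (by linarith) hu₀1
    have hB1 : ∫ v in x..(w₂inv x), (v - x) * fB v ≤
        (∫ v in x'..(w₂inv x'), (v - x') * fB v) + 2 * fupper * (x' - x) := by
      have hd := int_drop fB hmB flower fupper hfl hBl hBu hx.1 (hWge x hx)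
        (hWmono x x' hx hxx'.le) (hWle1 x' hxc)
      have hnn : 0 ≤ flower * ((w₂inv x - x) * (w₂inv x' - w₂inv x)) :=
        mul_nonneg hfl.le (mul_nonneg (by linarith [hWge x hx])
          (by linarith [hWmono x x' hx hxx'.le]))
      have hsh := int_shift fB hmB flower fupper hfl hBl hBu hx.1 hxx'.le
        (hWge x' hxc) (hWle1 x' hxc)
      linarith
    have p1 : flower * (δ / 4 * (δ / 4)) ≤
        flower * ((φ x + δ / 2 - x') * (u₀ - (φ x + δ / 2))) := by
      apply mul_le_mul_of_nonneg_left _ hfl.le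
      apply mul_le_mul (by linarith) (by linarith) (by linarith) (by linarith)
    have hscal : (2 * β + 2) * fupper
        * (min (δ / 4) (β * flower * δ ^ 2 / (16 * ((2 * β + 2) * fupper))))
        ≤ β * flower * δ ^ 2 / 16 := by
      have h2 : (0:ℝ) < (2 * β + 2) * fupper := by positivity
      calc (2 * β + 2) * fupper
            * (min (δ / 4) (β * flower * δ ^ 2 / (16 * ((2 * β + 2) * fupper))))
          ≤ (2 * β + 2) * fupper * (β * flower * δ ^ 2 / (16 * ((2 * β + 2) * fupper))) :=
            mul_le_mul_of_nonneg_left hηs h2.le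
        _ = β * flower * δ ^ 2 / 16 := by field_simp
    have hfeas : β * (∫ v in x..(φ x + δ / 2), (v - x) * fA v)
        + (∫ v in x..(w₂inv x), (v - x) * fB v) ≤ K := by
      have s1 := mul_le_mul_of_nonneg_left hA1 hβ0.le
      rw [mul_sub] at s1
      have s2 := mul_le_mul_of_nonneg_left hA2 hβ0.le
      rw [mul_add] at s2
      have s3 := mul_le_mul_of_nonneg_left p1 hβ0.le
      have q1 : β * (flower * (δ / 4 * (δ / 4))) = β * flower * δ ^ 2 / 16 := by ring
      have q2 := mul_le_mul_of_nonneg_left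
        (show x' - x ≤ min (δ / 4) (β * flower * δ ^ 2 / (16 * ((2 * β + 2) * fupper)))
          by linarith)
        (show (0:ℝ) ≤ β * (2 * fupper) by positivity)
      have q4 := mul_le_mul_of_nonneg_left
        (show x' - x ≤ min (δ / 4) (β * flower * δ ^ 2 / (16 * ((2 * β + 2) * fupper)))
          by linarith)
        (show (0:ℝ) ≤ 2 * fupper by positivity)
      linarith [s1, s2, s3, hB1, hu₀K, q1, q2, q4, hscal]
    have hup := hle x (φ x + δ / 2) ⟨by linarith, hu1⟩ hfeas
    linarith
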